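/- Let ε(ξ) = φ(ξ)/Φ(ξ) be the inverse Mills ratio. Then lim_{ξ→−∞} (ξ·ε(ξ) + ε(ξ)²) = 1. -/

import Mathlib

open MeasureTheory Real Filter

noncomputable def stdNormalPDF (x : ℝ) : ℝ := Real.exp (-x ^ 2 / 2) / Real.sqrt (2 * Real.pi)

noncomputable def stdNormalCDF (x : ℝ) : ℝ := ∫ t in Set.Iic x, stdNormalPDF t

lemma pdf_pos (x : ℝ) : 0 < stdNormalPDF x :=
  div_pos (Real.exp_pos _) (Real.sqrt_pos.2 (by positivity))

lemma pdf_cont : Continuous stdNormalPDF := by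
  unfold stdNormalPDF; fun_prop

lemma pdf_integrable : Integrable stdNormalPDF := by
  have h := integrable_exp_neg_mul_sq (b := (1/2 : ℝ)) (by norm_num)
  refine (h.div_const (Real.sqrt (2 * Real.pi))).congr ?_
  filter_upwards with x
  unfold stdNormalPDF
  ring_nf

lemma mul_pdf_integrable : Integrable (fun x => x * stdNormalPDF x) := by
  have h := integrable_mul_exp_neg_mul_sq (b := (1/2 : ℝ)) (by norm_num)
  refine (h.div_const (Real.sqrt (2 * Real.pi))).congr ?_
  filter_upwards with x
  unfold stdNormalPDF
  ring_nf

lemma hasDerivAt_pdf (x : ℝ) : HasDerivAt stdNormalPDF (-x * stdNormalPDF x) x := by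
  have h : HasDerivAt (fun y : ℝ => -y ^ 2 / 2) (-x) x := by
    have h0 := ((hasDerivAt_pow 2 x).neg).div_const 2
    exact h0.congr_deriv (by ring)
  have h1 := (h.exp).div_const (Real.sqrt (2 * Real.pi))
  exact h1.congr_deriv (by unfold stdNormalPDF; ring)

lemma pdf_tendsto_zero : Tendsto stdNormalPDF atBot (nhds 0) := by
  have hsq : Tendsto (fun x : ℝ => x ^ 2) atBot atTop := by
    have h := (tendsto_pow_atTop (n := 2) (by norm_num)).comp (tendsto_neg_atBot_atTop (G := ℝ))
    refine h.congr fun x => ?_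
    show (-x) ^ 2 = x ^ 2
    ring
  have h1 : Tendsto (fun x : ℝ => -x ^ 2 / 2) atBot atBot := by
    apply Tendsto.atBot_div_const (by norm_num : (0:ℝ) < 2)
    refine (tendsto_neg_atTop_atBot.comp hsq).congr fun x => rfl
  have h2 : Tendsto (fun x : ℝ => Real.exp (-x ^ 2 / 2)) atBot (nhds 0) :=
    Real.tendsto_exp_atBot.comp h1
  have h3 := h2.div_const (Real.sqrt (2 * Real.pi))
  rw [zero_div] at h3
  exact h3

lemma hasDerivAt_cdf (x : ℝ) : HasDerivAt stdNormalCDF (stdNormalPDF x) x := by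
  have key : ∀ y : ℝ, stdNormalCDF y = stdNormalCDF 0 + ∫ t in (0:ℝ)..y, stdNormalPDF t := by
    intro y
    rw [← intervalIntegral.integral_Iic_sub_Iic pdf_integrable.integrableOn
      pdf_integrable.integrableOn]
    unfold stdNormalCDF; ring
  have h : HasDerivAt (fun y => stdNormalCDF 0 + ∫ t in (0:ℝ)..y, stdNormalPDF t)
      (stdNormalPDF x) x := by
    apply HasDerivAt.const_add
    exact intervalIntegral.integral_hasDerivAt_right
      (pdf_integrable.intervalIntegrable)
      (pdf_cont.stronglyMeasurableAtFilter _ _)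
      pdf_cont.continuousAt
  exact h.congr_of_eventuallyEq (Filter.Eventually.of_forall key)

lemma integral_mul_pdf (ξ : ℝ) : ∫ t in Set.Iic ξ, t * stdNormalPDF t = -stdNormalPDF ξ := by
  have := MeasureTheory.integral_Iic_of_hasDerivAt_of_tendsto' (a := ξ)
    (f := fun t => -stdNormalPDF t) (f' := fun t => t * stdNormalPDF t)
    (m := 0) (fun t _ => (hasDerivAt_pdf t).neg.congr_deriv (by ring))
    (mul_pdf_integrable.integrableOn) (by simpa using pdf_tendsto_zero.neg)
  simpa using this

lemma cdf_pos (ξ : ℝ) : 0 < stdNormalCDF ξ := by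
  rw [stdNormalCDF, MeasureTheory.setIntegral_pos_iff_support_of_nonneg_ae
    (Filter.Eventually.of_forall fun x => (pdf_pos x).le) pdf_integrable.integrableOn]
  have : Function.support stdNormalPDF = Set.univ := by
    ext x; simp [Function.support, (pdf_pos x).ne']
  rw [this, Set.univ_inter]
  simp [Real.volume_Iic]

lemma millsB {ξ : ℝ} (hξ : ξ < 0) : 0 ≤ ξ * stdNormalCDF ξ + stdNormalPDF ξ ∧
    stdNormalCDF ξ ≤ stdNormalPDF ξ / (-ξ) := by
  have key : stdNormalCDF ξ ≤ (1/ξ) * ∫ t in Set.Iic ξ, t * stdNormalPDF t := by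
    rw [← MeasureTheory.integral_const_mul]
    apply MeasureTheory.setIntegral_mono_on pdf_integrable.integrableOn
      ((mul_pdf_integrable.integrableOn).const_mul _) measurableSet_Iic
    intro t ht
    simp only [Set.mem_Iic] at ht
    have h1 : (1:ℝ) ≤ 1/ξ * t := by
      rw [one_div, ← div_eq_inv_mul, le_div_iff_of_neg hξ]
      simpa using ht
    calc stdNormalPDF t = 1 * stdNormalPDF t := (one_mul _).symm
      _ ≤ (1/ξ * t) * stdNormalPDF t := mul_le_mul_of_nonneg_right h1 (pdf_pos t).le
      _ = 1/ξ * (t * stdNormalPDF t) := by ring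
  rw [integral_mul_pdf] at key
  have h := mul_le_mul_of_nonpos_left key hξ.le
  rw [show ξ * (1/ξ * -stdNormalPDF ξ) = -stdNormalPDF ξ by
    rw [← mul_assoc, mul_one_div_cancel hξ.ne, one_mul]] at h
  refine ⟨by linarith, ?_⟩
  rw [le_div_iff₀ (neg_pos.2 hξ)]
  nlinarith

lemma cdf_tendsto_zero : Tendsto stdNormalCDF atBot (nhds 0) := by
  apply tendsto_of_tendsto_of_tendsto_of_le_of_le' (f := stdNormalCDF) (g := fun _ : ℝ => (0:ℝ))
    (h := stdNormalPDF) tendsto_const_nhds pdf_tendsto_zero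
  · filter_upwards with ξ using (cdf_pos ξ).le
  · filter_upwards [eventually_le_atBot (-1 : ℝ)] with ξ hξ
    have h := (millsB (by linarith : ξ < 0)).2
    have h2 : stdNormalPDF ξ / (-ξ) ≤ stdNormalPDF ξ := by
      rw [div_le_iff₀ (by linarith)]
      nlinarith [pdf_pos ξ]
    linarith

lemma inv_tendsto_zero_atBot : Tendsto (fun ξ : ℝ => ξ⁻¹) atBot (nhds 0) := by
  have h := (tendsto_inv_atTop_zero.comp (tendsto_neg_atBot_atTop (G := ℝ))).neg
  simp only [Function.comp_def, inv_neg, neg_neg, neg_zero] at h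
  exact h

lemma step1 : Tendsto (fun ξ : ℝ => stdNormalCDF ξ / (stdNormalPDF ξ / ξ)) atBot (nhds (-1)) := by
  apply HasDerivAt.lhopital_zero_atBot
    (f' := fun ξ => stdNormalPDF ξ)
    (g' := fun ξ => ((-ξ * stdNormalPDF ξ) * ξ - stdNormalPDF ξ * 1) / ξ ^ 2)
  · filter_upwards with ξ using hasDerivAt_cdf ξ
  · filter_upwards [eventually_lt_atBot (0:ℝ)] with ξ hξ
    exact (hasDerivAt_pdf ξ).div (hasDerivAt_id ξ) hξ.ne
  · filter_upwards [eventually_lt_atBot (0:ℝ)] with ξ hξ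
    have hp := pdf_pos ξ
    rw [show (-ξ * stdNormalPDF ξ) * ξ - stdNormalPDF ξ * 1
      = -(stdNormalPDF ξ * (ξ^2 + 1)) by ring]
    apply div_ne_zero _ (pow_ne_zero 2 hξ.ne)
    rw [neg_ne_zero]
    positivity
  · exact cdf_tendsto_zero
  · apply tendsto_of_tendsto_of_tendsto_of_le_of_le'
      (g := fun ξ : ℝ => -stdNormalPDF ξ) (h := fun _ : ℝ => (0:ℝ))
      (by simpa using pdf_tendsto_zero.neg) tendsto_const_nhds
    · filter_upwards [eventually_le_atBot (-1 : ℝ)] with ξ hξ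
      have hp := pdf_pos ξ
      rw [le_div_iff_of_neg (by linarith : ξ < 0)]
      nlinarith
    · filter_upwards [eventually_lt_atBot (0:ℝ)] with ξ hξ
      exact div_nonpos_of_nonneg_of_nonpos (pdf_pos ξ).le hξ.le
  · have heq : ∀ᶠ ξ : ℝ in atBot,
        stdNormalPDF ξ / (((-ξ * stdNormalPDF ξ) * ξ - stdNormalPDF ξ * 1) / ξ ^ 2)
          = 1 / (-1 - (ξ⁻¹)^2) := by
      filter_upwards [eventually_lt_atBot (0:ℝ)] with ξ hξ
      have hp := pdf_pos ξ
      have hξ0 : ξ ≠ 0 := hξ.ne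
      rw [div_div_eq_mul_div,
        show (-1 - (ξ⁻¹)^2 : ℝ) = (-ξ^2 - 1)/ξ^2 by field_simp, one_div_div,
        div_eq_div_iff
          (by nlinarith [mul_pos hp (mul_pos_of_neg_of_neg hξ hξ)] : (-ξ * stdNormalPDF ξ) * ξ - stdNormalPDF ξ * 1 < 0).ne
          (by nlinarith : (-ξ^2 - 1 : ℝ) < 0).ne]
      ring
    rw [tendsto_congr' heq]
    have h1 : Tendsto (fun ξ : ℝ => -1 - (ξ⁻¹)^2) atBot (nhds (-1)) := by
      have := (inv_tendsto_zero_atBot.pow 2)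
      simpa using (tendsto_const_nhds (x := (-1:ℝ)) (f := atBot (α := ℝ))).sub this
    have h2 := h1.inv₀ (by norm_num)
    simp only [one_div]
    convert h2 using 2
    norm_num

/-- `lim_{ξ→−∞} (ξ·ε(ξ) + ε(ξ)²) = 1` where `ε = φ/Φ`. -/
theorem stmt_4 :
    Tendsto (fun ξ : ℝ =>
        ξ * (stdNormalPDF ξ / stdNormalCDF ξ) + (stdNormalPDF ξ / stdNormalCDF ξ) ^ 2)
      atBot (nhds 1) := by
  have key : Tendsto (fun ξ : ℝ => (ξ * stdNormalCDF ξ + stdNormalPDF ξ) /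
      ((stdNormalCDF ξ)^2 / stdNormalPDF ξ)) atBot (nhds 1) := by
    apply HasDerivAt.lhopital_zero_atBot
      (f' := fun ξ => stdNormalCDF ξ)
      (g' := fun ξ => ((2 * stdNormalCDF ξ * stdNormalPDF ξ) * stdNormalPDF ξ -
        (stdNormalCDF ξ)^2 * (-ξ * stdNormalPDF ξ)) / (stdNormalPDF ξ)^2)
    · filter_upwards with ξ
      have h := ((hasDerivAt_id ξ).mul (hasDerivAt_cdf ξ)).add (hasDerivAt_pdf ξ)
      exact h.congr_deriv (by simp)
    · filter_upwards with ξ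
      have h := ((hasDerivAt_cdf ξ).pow 2).div (hasDerivAt_pdf ξ) (pdf_pos ξ).ne'
      exact h.congr_deriv (by simp only [Pi.pow_apply]; ring)
    · filter_upwards [eventually_lt_atBot (0:ℝ)] with ξ hξ
      have hp := pdf_pos ξ
      have hc := cdf_pos ξ
      have hm := (millsB hξ).1
      rw [show (2 * stdNormalCDF ξ * stdNormalPDF ξ) * stdNormalPDF ξ -
          (stdNormalCDF ξ)^2 * (-ξ * stdNormalPDF ξ) =
          stdNormalCDF ξ * stdNormalPDF ξ *
          (stdNormalPDF ξ + (stdNormalPDF ξ + ξ * stdNormalCDF ξ)) by ring]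
      apply div_ne_zero _ (by positivity)
      have h2 : (0:ℝ) < stdNormalPDF ξ + (stdNormalPDF ξ + ξ * stdNormalCDF ξ) := by nlinarith
      positivity
    · apply tendsto_of_tendsto_of_tendsto_of_le_of_le' (g := fun _ : ℝ => (0:ℝ))
        (h := stdNormalPDF) tendsto_const_nhds pdf_tendsto_zero
      · filter_upwards [eventually_lt_atBot (0:ℝ)] with ξ hξ
        have := (millsB hξ).1; linarith
      · filter_upwards [eventually_lt_atBot (0:ℝ)] with ξ hξ
        have := cdf_pos ξ
        nlinarith
    · apply tendsto_of_tendsto_of_tendsto_of_le_of_le' (g := fun _ : ℝ => (0:ℝ))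
        (h := stdNormalPDF) tendsto_const_nhds pdf_tendsto_zero
      · filter_upwards with ξ
        have h1 := cdf_pos ξ; have h2 := pdf_pos ξ; positivity
      · filter_upwards [eventually_le_atBot (-1 : ℝ)] with ξ hξ
        have hp := pdf_pos ξ
        have hc := cdf_pos ξ
        have hb := (millsB (by linarith : ξ < 0)).2
        have h1 : stdNormalCDF ξ ^ 2 ≤ (stdNormalPDF ξ / (-ξ))^2 := by
          apply sq_le_sq' _ hb
          nlinarith
        rw [div_le_iff₀ hp]
        have h2 : (stdNormalPDF ξ / (-ξ))^2 = stdNormalPDF ξ ^2 / ξ^2 := by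
          rw [div_pow]; ring_nf
        rw [h2] at h1
        have h4 : (1:ℝ) ≤ ξ^2 := by nlinarith
        have h3 : stdNormalPDF ξ ^2 / ξ^2 ≤ stdNormalPDF ξ ^ 2 := by
          rw [div_le_iff₀ (by nlinarith : (0:ℝ) < ξ^2)]
          nlinarith [mul_le_mul_of_nonneg_left h4 (sq_nonneg (stdNormalPDF ξ))]
        nlinarith
    · have heq : ∀ᶠ ξ : ℝ in atBot,
          stdNormalCDF ξ / (((2 * stdNormalCDF ξ * stdNormalPDF ξ) * stdNormalPDF ξ -
            (stdNormalCDF ξ)^2 * (-ξ * stdNormalPDF ξ)) / (stdNormalPDF ξ)^2) =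
          1 / (2 + stdNormalCDF ξ / (stdNormalPDF ξ / ξ)) := by
        filter_upwards [eventually_lt_atBot (0:ℝ)] with ξ hξ
        have hp := pdf_pos ξ
        have hc := cdf_pos ξ
        have hm := (millsB hξ).1
        have hd : 0 < 2 * stdNormalPDF ξ + ξ * stdNormalCDF ξ := by nlinarith
        rw [div_div_eq_mul_div,
          show (2 * stdNormalCDF ξ * stdNormalPDF ξ) * stdNormalPDF ξ -
            (stdNormalCDF ξ)^2 * (-ξ * stdNormalPDF ξ) =
            stdNormalCDF ξ * stdNormalPDF ξ *
            (2 * stdNormalPDF ξ + ξ * stdNormalCDF ξ) by ring,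
          show stdNormalCDF ξ / (stdNormalPDF ξ / ξ) = stdNormalCDF ξ * ξ / stdNormalPDF ξ by
            rw [div_div_eq_mul_div],
          show (2 : ℝ) + stdNormalCDF ξ * ξ / stdNormalPDF ξ =
            (2 * stdNormalPDF ξ + ξ * stdNormalCDF ξ) / stdNormalPDF ξ by
            field_simp,
          one_div_div, div_eq_div_iff (by positivity) hd.ne']
        ring
      rw [tendsto_congr' heq]
      have h1 : Tendsto (fun ξ : ℝ => 2 + stdNormalCDF ξ / (stdNormalPDF ξ / ξ)) atBot (nhds 1) := by
        have h0 := (tendsto_const_nhds (x := (2:ℝ)) (f := atBot (α := ℝ))).add step1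
        norm_num at h0
        exact h0
      have h2 := h1.inv₀ (by norm_num)
      simp only [one_div]
      simpa using h2
  apply key.congr'
  filter_upwards with ξ
  have hp := (pdf_pos ξ).ne'
  have hc := (cdf_pos ξ).ne'
  field_simp
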